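/- Let l ≥ 3 and let P ∈ ℂ[X₀,X₁]_l be nonzero. Then the following are equivalent: (i) Ann(P)_1 = 0 and Ann(P)_2 is the one-dimensional subspace ℂ·λ² spanned by the square of some nonzero linear form λ; (ii) P = μ^{l−1}ν for some linearly independent linear forms μ, ν ∈ ℂ[X₀,X₁]_1 (i.e. P is GL(2,ℂ)-equivalent to X₀^{l−1}X₁). -/

import Mathlib

/-!
Common definitions: the apolar action of `ℂ[X₀,X₁]` on itself
(`Q • P := Q(∂/∂X₀, ∂/∂X₁)(P)`), the apolar ideal `Ann(P)` and its homogeneous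
components, the cokernel `C_P^d` of `Q ↦ Q • P : ℂ[X₀,X₁]_d → ℂ[X₀,X₁]_{l-d}`,
the invariant `d₁(P)` and the Waring rank.
-/

open MvPolynomial

noncomputable section

/-- The partial derivative `∂/∂Xᵢ` as a `ℂ`-linear endomorphism of `ℂ[X₀,X₁]`. -/
def pd (i : Fin 2) : Module.End ℂ (MvPolynomial (Fin 2) ℂ) := (pderiv (R := ℂ) i).toLinearMap

lemma pd_comm : Commute (pd 0) (pd 1) := by
  apply LinearMap.ext
  intro P
  induction P using MvPolynomial.induction_on' with
  | monomial s a =>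
      simp [pd, Module.End.mul_apply, pderiv_monomial]
      rw [tsub_right_comm, mul_right_comm]
  | add p q hp hq => simp_all [Module.End.mul_apply, map_add]

/-- The endomorphism `∂₀^{m 0} ∘ ∂₁^{m 1}` of `ℂ[X₀,X₁]`, as a monoid homomorphism in the
exponent `m`. -/
def derivMonomialHom :
    Multiplicative (Fin 2 →₀ ℕ) →* Module.End ℂ (MvPolynomial (Fin 2) ℂ) where
  toFun m := pd 0 ^ (Multiplicative.toAdd m 0) * pd 1 ^ (Multiplicative.toAdd m 1)
  map_one' := by simp
  map_mul' a b := by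
    simp only [toAdd_mul, Finsupp.add_apply, pow_add]
    exact (Commute.pow_pow pd_comm _ _).mul_mul_mul_comm _ _

/-- The representation of `ℂ[X₀,X₁]` by constant-coefficient differential operators:
`diffOp Q = Q(∂/∂X₀, ∂/∂X₁)`.  It is the morphism of `ℂ`-algebras sending `X i` to
`∂/∂Xᵢ`. -/
def diffOp : MvPolynomial (Fin 2) ℂ →ₐ[ℂ] Module.End ℂ (MvPolynomial (Fin 2) ℂ) :=
  AddMonoidAlgebra.lift ℂ _ (Fin 2 →₀ ℕ) derivMonomialHom

/-- The apolar action `Q • P := Q(∂/∂X₀, ∂/∂X₁)(P)`. -/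
def apolar (Q P : MvPolynomial (Fin 2) ℂ) : MvPolynomial (Fin 2) ℂ := diffOp Q P

/-- For fixed `P`, the map `Q ↦ Q • P` is `ℂ`-linear in `Q`. -/
def apolarLM (P : MvPolynomial (Fin 2) ℂ) :
    MvPolynomial (Fin 2) ℂ →ₗ[ℂ] MvPolynomial (Fin 2) ℂ :=
  (LinearMap.applyₗ P).comp diffOp.toLinearMap

lemma apolarLM_apply (P Q : MvPolynomial (Fin 2) ℂ) : apolarLM P Q = apolar Q P := rfl

/-- The apolar ideal `Ann(P) = {Q | Q • P = 0}`. -/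
def annIdeal (P : MvPolynomial (Fin 2) ℂ) : Ideal (MvPolynomial (Fin 2) ℂ) where
  carrier := {Q | apolar Q P = 0}
  zero_mem' := by simp [apolar]
  add_mem' := by
    intro a b ha hb
    simp only [Set.mem_setOf_eq, apolar, map_add, LinearMap.add_apply] at *
    rw [ha, hb, add_zero]
  smul_mem' := by
    intro c Q hQ
    simp only [Set.mem_setOf_eq, smul_eq_mul, apolar, map_mul, Module.End.mul_apply] at *
    rw [hQ, map_zero]

/-- The degree-`d` homogeneous component `Ann(P)_d` of the apolar ideal of `P`. -/
def annComp (P : MvPolynomial (Fin 2) ℂ) (d : ℕ) :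
    Submodule ℂ (MvPolynomial (Fin 2) ℂ) :=
  homogeneousSubmodule (Fin 2) ℂ d ⊓ LinearMap.ker (apolarLM P)

/-- The image of `ℂ[X₀,X₁]_d` under `Q ↦ Q • P`, viewed as a subspace of `ℂ[X₀,X₁]_{l-d}`
(for `P` homogeneous of degree `l` and `d ≤ l` the image is indeed contained in
`ℂ[X₀,X₁]_{l-d}`). -/
def apolarImage (P : MvPolynomial (Fin 2) ℂ) (l d : ℕ) :
    Submodule ℂ (homogeneousSubmodule (Fin 2) ℂ (l - d)) :=
  Submodule.comap (homogeneousSubmodule (Fin 2) ℂ (l - d)).subtype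
    (Submodule.map (apolarLM P) (homogeneousSubmodule (Fin 2) ℂ d))

/-- `C_P^d`: the cokernel of the `ℂ`-linear map `ℂ[X₀,X₁]_d → ℂ[X₀,X₁]_{l-d}`, `Q ↦ Q • P`. -/
abbrev ApolarCoker (P : MvPolynomial (Fin 2) ℂ) (l d : ℕ) :=
  (homogeneousSubmodule (Fin 2) ℂ (l - d)) ⧸ apolarImage P l d

/-- `d₁(P)`: the minimal degree of a nonzero homogeneous polynomial in `Ann(P)`. -/
def d1 (P : MvPolynomial (Fin 2) ℂ) : ℕ :=
  sInf {d | ∃ Q : MvPolynomial (Fin 2) ℂ, Q ≠ 0 ∧ Q.IsHomogeneous d ∧ apolar Q P = 0}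

/-- The Waring rank of a binary form `P` of degree `l`: the least `r` such that `P` is a sum
of `r` `l`-th powers of linear forms. -/
def waringRank (l : ℕ) (P : MvPolynomial (Fin 2) ℂ) : ℕ :=
  sInf {r | ∃ lam : Fin r → MvPolynomial (Fin 2) ℂ,
    (∀ i, (lam i).IsHomogeneous 1) ∧ P = ∑ i, lam i ^ l}

end


noncomputable section

lemma diffOp_single (m : Fin 2 →₀ ℕ) (c : ℂ) :
    diffOp (monomial m c) = c • (pd 0 ^ (m 0) * pd 1 ^ (m 1)) := by
  exact AddMonoidAlgebra.lift_single derivMonomialHom m c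

lemma apolar_X (i : Fin 2) (f : MvPolynomial (Fin 2) ℂ) : apolar (X i) f = pderiv i f := by
  have : (X i : MvPolynomial (Fin 2) ℂ) = monomial (Finsupp.single i 1) 1 := rfl
  rw [apolar, this, diffOp_single]
  fin_cases i <;> simp [pd]

lemma apolar_C (a : ℂ) (f : MvPolynomial (Fin 2) ℂ) : apolar (C a) f = a • f := by
  rw [apolar, ← algebraMap_eq, AlgHom.commutes]
  rfl

lemma apolar_mul (Q R f : MvPolynomial (Fin 2) ℂ) :
    apolar (Q * R) f = apolar Q (apolar R f) := by
  rw [apolar, map_mul]; rfl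

lemma apolar_add_left (Q R f : MvPolynomial (Fin 2) ℂ) :
    apolar (Q + R) f = apolar Q f + apolar R f := by
  rw [apolar, map_add]; rfl

lemma apolar_add_right (Q f g : MvPolynomial (Fin 2) ℂ) :
    apolar Q (f + g) = apolar Q f + apolar Q g := map_add (diffOp Q) f g

lemma apolar_sub_right (Q f g : MvPolynomial (Fin 2) ℂ) :
    apolar Q (f - g) = apolar Q f - apolar Q g := map_sub (diffOp Q) f g

lemma apolar_lin (a b : ℂ) (f : MvPolynomial (Fin 2) ℂ) :
    apolar (C a * X 0 + C b * X 1) f = a • pderiv 0 f + b • pderiv 1 f := by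
  rw [apolar_add_left, apolar_mul, apolar_mul, apolar_X, apolar_X, apolar_C, apolar_C]


lemma apolar_lin_mul (a b : ℂ) (f g : MvPolynomial (Fin 2) ℂ) :
    apolar (C a * X 0 + C b * X 1) (f * g)
      = apolar (C a * X 0 + C b * X 1) f * g + f * apolar (C a * X 0 + C b * X 1) g := by
  simp only [apolar_lin, pderiv_mul, smul_add, smul_eq_C_mul]
  ring

lemma apolar_lin_C_mul (a b c : ℂ) (f : MvPolynomial (Fin 2) ℂ) :
    apolar (C a * X 0 + C b * X 1) (C c * f) = C c * apolar (C a * X 0 + C b * X 1) f := by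
  simp only [apolar_lin, pderiv_C_mul, mul_add, mul_smul_comm]

lemma apolar_lin_lin (a b p q : ℂ) :
    apolar (C a * X 0 + C b * X 1) (C p * X 0 + C q * X 1) = C (a * p + b * q) := by
  simp only [apolar_lin, map_add, pderiv_C_mul, pderiv_X_self, pderiv_X_of_ne (by decide : (1:Fin 2) ≠ 0), pderiv_X_of_ne (by decide : (0:Fin 2) ≠ 1), smul_eq_C_mul, map_mul, map_add]
  ring

lemma apolar_lin_pow (a b c : ℂ) (f : MvPolynomial (Fin 2) ℂ)
    (h : apolar (C a * X 0 + C b * X 1) f = C c) (n : ℕ) :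
    apolar (C a * X 0 + C b * X 1) (f ^ (n + 1)) = C ((n + 1 : ℕ) * c) * f ^ n := by
  induction n with
  | zero => simpa using h
  | succ k ih =>
      rw [pow_succ, apolar_lin_mul, ih, h]
      push_cast [map_mul, map_add, map_natCast, map_one]
      ring


lemma deg2 (m : Fin 2 →₀ ℕ) : m.degree = m 0 + m 1 := by
  rw [Finsupp.degree, ← Fin.sum_univ_two (f := fun i => m i)]
  exact Finset.sum_subset (Finset.subset_univ _) (by
    intro i _ hi
    simpa using Finsupp.notMem_support_iff.mp hi)

lemma monomial_eq2 (m : Fin 2 →₀ ℕ) (c : ℂ) :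
    (monomial m c : MvPolynomial (Fin 2) ℂ) = C c * (X 0 ^ (m 0) * X 1 ^ (m 1)) := by
  rw [monomial_eq]
  congr 1
  rw [Finsupp.prod_fintype _ _ (fun i => pow_zero _), Fin.prod_univ_two]

lemma support_deg {d : ℕ} {f : MvPolynomial (Fin 2) ℂ} (hf : f.IsHomogeneous d)
    {m : Fin 2 →₀ ℕ} (hm : m ∈ f.support) : m 0 + m 1 = d := by
  rw [← deg2]
  by_contra h
  exact mem_support_iff.mp hm (hf.coeff_eq_zero h)

lemma homog_decomp {d : ℕ} {f : MvPolynomial (Fin 2) ℂ} (hf : f.IsHomogeneous d) :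
    ∃ c : Fin (d + 1) → ℂ, f = ∑ i, C (c i) * (X 0 ^ (i : ℕ) * X 1 ^ (d - (i : ℕ))) := by
  have hmem : f ∈ Submodule.span ℂ
      (Set.range fun i : Fin (d + 1) => (X 0 ^ (i : ℕ) * X 1 ^ (d - (i : ℕ)) :
        MvPolynomial (Fin 2) ℂ)) := by
    rw [show f = ∑ m ∈ f.support, monomial m (coeff m f) from f.as_sum]
    apply Submodule.sum_mem
    intro m hm
    have hdeg := support_deg hf hm
    rw [monomial_eq2, ← smul_eq_C_mul]
    apply Submodule.smul_mem
    apply Submodule.subset_span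
    refine ⟨⟨m 0, by omega⟩, ?_⟩
    show X 0 ^ (m 0) * X 1 ^ (d - m 0) = _
    rw [show d - m 0 = m 1 by omega]
  rw [Submodule.mem_span_range_iff_exists_fun] at hmem
  obtain ⟨c, hc⟩ := hmem
  exact ⟨c, by rw [← hc]; exact Finset.sum_congr rfl fun i _ => smul_eq_C_mul _ _⟩

lemma lin_eq_zero {a b : ℂ} (h : C a * X 0 + C b * X 1 = (0 : MvPolynomial (Fin 2) ℂ)) :
    a = 0 ∧ b = 0 := by
  constructor
  · have := congrArg (coeff (Finsupp.single 0 1)) h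
    simpa [coeff_X', Finsupp.single_eq_single_iff] using this
  · have := congrArg (coeff (Finsupp.single 1 1)) h
    simpa [coeff_X', Finsupp.single_eq_single_iff] using this


lemma euler_aux (m : Fin 2 →₀ ℕ) (c : ℂ) (i : Fin 2) :
    X i * pderiv i (monomial m c : MvPolynomial (Fin 2) ℂ) = (m i) • monomial m c := by
  rw [pderiv_monomial]
  rcases Nat.eq_zero_or_pos (m i) with h0 | h0
  · simp [h0]
  · rw [X, monomial_mul, one_mul]
    have : Finsupp.single i 1 + (m - Finsupp.single i 1) = m := by
      ext j
      by_cases hj : j = i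
      · subst hj
        simp only [Finsupp.add_apply, Finsupp.single_eq_same, Finsupp.tsub_apply]
        omega
      · simp [Finsupp.single_apply, Ne.symm hj, hj]
    rw [this, smul_monomial]
    congr 1
    rw [nsmul_eq_mul]
    ring

lemma euler {d : ℕ} {f : MvPolynomial (Fin 2) ℂ} (hf : f.IsHomogeneous d) :
    X 0 * pderiv 0 f + X 1 * pderiv 1 f = d • f := by
  conv_lhs => rw [f.as_sum]
  conv_rhs => rw [f.as_sum]
  rw [map_sum, map_sum, Finset.mul_sum, Finset.mul_sum, ← Finset.sum_add_distrib,
    Finset.smul_sum]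
  refine Finset.sum_congr rfl fun m hm => ?_
  rw [euler_aux, euler_aux, ← add_smul, support_deg hf hm]

lemma pderiv_homog {d : ℕ} {f : MvPolynomial (Fin 2) ℂ} (i : Fin 2)
    (hf : f.IsHomogeneous (d + 1)) : (pderiv i f).IsHomogeneous d := by
  conv_lhs => rw [f.as_sum]
  rw [map_sum]
  apply IsHomogeneous.sum
  intro m hm
  rw [pderiv_monomial]
  rcases Nat.eq_zero_or_pos (m i) with h0 | h0
  · rw [h0]; simpa using isHomogeneous_zero (Fin 2) ℂ d
  · apply isHomogeneous_monomial
    have hdeg := support_deg hf hm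
    rw [deg2, Finsupp.tsub_apply, Finsupp.tsub_apply]
    have hi : i = 0 ∨ i = 1 := by fin_cases i <;> [left; right] <;> rfl
    rcases hi with rfl | rfl <;>
      simp only [Finsupp.single_eq_same, Finsupp.single_eq_of_ne (show (0:Fin 2) ≠ 1 by decide),
        Finsupp.single_eq_of_ne (show (1:Fin 2) ≠ 0 by decide)] <;> omega


lemma pderiv_swap (f : MvPolynomial (Fin 2) ℂ) :
    pderiv 0 (pderiv 1 f) = pderiv 1 (pderiv 0 f) := by
  have := LinearMap.ext_iff.mp pd_comm f
  simpa [pd, Module.End.mul_apply] using this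

lemma kernel_lam (u v : ℂ) (huv : ¬(u = 0 ∧ v = 0)) :
    ∀ (d : ℕ) (f : MvPolynomial (Fin 2) ℂ), f.IsHomogeneous d →
      apolar (C u * X 0 + C v * X 1) f = 0 →
      ∃ c : ℂ, f = C c * (C v * X 0 + C (-u) * X 1) ^ d := by
  intro d
  induction d with
  | zero =>
      intro f hf _
      obtain ⟨c, hc⟩ := homog_decomp hf
      exact ⟨c 0, by simpa using hc⟩
  | succ d ih =>
      intro f hf hker
      rw [apolar_lin] at hker
      have h0 : apolar (C u * X 0 + C v * X 1) (pderiv 0 f) = 0 := by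
        rw [apolar_lin]
        have := congrArg (pderiv (0 : Fin 2)) hker
        simpa [map_add, pderiv_swap f, LinearMap.map_smul] using this
      have h1 : apolar (C u * X 0 + C v * X 1) (pderiv 1 f) = 0 := by
        rw [apolar_lin]
        have := congrArg (pderiv (1 : Fin 2)) hker
        simpa [map_add, pderiv_swap f, LinearMap.map_smul] using this
      obtain ⟨a, ha⟩ := ih (pderiv 0 f) (pderiv_homog 0 hf) h0
      obtain ⟨b, hb⟩ := ih (pderiv 1 f) (pderiv_homog 1 hf) h1
      have hmu0 : (C v * X 0 + C (-u) * X 1 : MvPolynomial (Fin 2) ℂ) ≠ 0 := by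
        intro h
        obtain ⟨hv, hu⟩ := lin_eq_zero h
        exact huv ⟨neg_eq_zero.mp hu, hv⟩
      have hab : u * a + v * b = 0 := by
        have hz : C (u * a + v * b) * (C v * X 0 + C (-u) * X 1 : MvPolynomial (Fin 2) ℂ) ^ d
            = 0 := by
          rw [← hker, ha, hb]
          simp only [smul_eq_C_mul, map_add, map_mul]
          ring
        rcases mul_eq_zero.mp hz with h | h
        · exact (C_eq_zero).mp h
        · exact absurd h (pow_ne_zero _ hmu0)
      obtain ⟨t, hta, htb⟩ : ∃ t : ℂ, a = t * v ∧ b = -(t * u) := by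
        rcases not_and_or.mp huv with hu | hv
        · refine ⟨-(b / u), ?_, by field_simp⟩
          field_simp
          linear_combination hab
        · refine ⟨a / v, by field_simp, ?_⟩
          field_simp
          linear_combination hab
      have heu := euler hf
      rw [ha, hb] at heu
      have hlhs : X (0 : Fin 2) * (C a * (C v * X 0 + C (-u) * X 1) ^ d)
          + X 1 * (C b * (C v * X 0 + C (-u) * X 1) ^ d)
          = C t * (C v * X 0 + C (-u) * X 1) ^ (d + 1) := by
        rw [hta, htb, pow_succ]
        simp only [map_mul, map_neg]
        ring
      replace heu := hlhs.symm.trans heu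
      have hd1 : ((d : ℂ) + 1) ≠ 0 := Nat.cast_add_one_ne_zero d
      have hsm : (d + 1 : ℕ) • f = C ((d : ℂ) + 1) * f := by
        rw [nsmul_eq_mul]
        congr 1
        simp [map_natCast]
      rw [hsm] at heu
      refine ⟨t / ((d : ℂ) + 1), ?_⟩
      apply mul_left_cancel₀ (show (C ((d : ℂ) + 1) : MvPolynomial (Fin 2) ℂ) ≠ 0 from
        fun h => hd1 (C_eq_zero.mp h))
      rw [← heu, ← mul_assoc, ← map_mul]
      congr 2
      field_simp


lemma lin_homog (a b : ℂ) : (C a * X 0 + C b * X 1 : MvPolynomial (Fin 2) ℂ).IsHomogeneous 1 :=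
  (isHomogeneous_C_mul_X a 0).add (isHomogeneous_C_mul_X b 1)

lemma indep_of_det {p q r s : ℂ} (h : p * s - q * r ≠ 0) :
    LinearIndependent ℂ ![(C p * X 0 + C q * X 1 : MvPolynomial (Fin 2) ℂ),
      C r * X 0 + C s * X 1] := by
  rw [LinearIndependent.pair_iff]
  intro m n hmn
  have h' : C (m * p + n * r) * X 0 + C (m * q + n * s) * X 1
      = (0 : MvPolynomial (Fin 2) ℂ) := by
    rw [← hmn]
    simp only [smul_eq_C_mul, map_add, map_mul]
    ring
  obtain ⟨h1, h2⟩ := lin_eq_zero h'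
  constructor
  · have hm : m * (p * s - q * r) = 0 := by linear_combination s * h1 - r * h2
    rcases mul_eq_zero.mp hm with h' | h'
    · exact h'
    · exact absurd h' h
  · have hn : n * (p * s - q * r) = 0 := by linear_combination p * h2 - q * h1
    rcases mul_eq_zero.mp hn with h' | h'
    · exact h'
    · exact absurd h' h

lemma det_of_indep {p q r s : ℂ}
    (h : LinearIndependent ℂ ![(C p * X 0 + C q * X 1 : MvPolynomial (Fin 2) ℂ),
      C r * X 0 + C s * X 1]) :
    p * s - q * r ≠ 0 := by
  intro hd
  rw [LinearIndependent.pair_iff] at h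
  by_cases hq : q = 0 ∧ s = 0
  · obtain ⟨hq0, hs0⟩ := hq
    subst hq0; subst hs0
    by_cases hp : p = 0
    · subst hp
      have := (h 1 0 (by simp)).1
      exact one_ne_zero this
    · have := (h r (-p) (by
        simp only [smul_eq_C_mul, map_zero, zero_mul, add_zero, map_neg]
        ring)).2
      exact hp (neg_eq_zero.mp this)
  · have := h s (-q) (by
      have e : s • (C p * X 0 + C q * X 1 : MvPolynomial (Fin 2) ℂ)
          + (-q) • (C r * X 0 + C s * X 1)
          = C (p * s - q * r) * X 0 := by
        simp only [smul_eq_C_mul, map_sub, map_mul, map_neg]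
        ring
      rw [e, hd]
      simp)
    exact hq ⟨neg_eq_zero.mp this.2, this.1⟩


lemma sq_comb (t pp qq aa bb cc : ℂ) (h1 : aa = t * qq ^ 2) (h2 : bb = -(2 * t * pp * qq))
    (h3 : cc = t * pp ^ 2) :
    t • (C qq * X 0 + C (-pp) * X 1 : MvPolynomial (Fin 2) ℂ) ^ 2
      = (C aa * X 0 + C bb * X 1) * X 0 + (C 0 * X 0 + C cc * X 1) * X 1 := by
  rw [h1, h2, h3, smul_eq_C_mul]
  simp only [map_mul, map_neg, map_ofNat, map_pow, map_zero]
  ring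

lemma mem_annComp {P Q : MvPolynomial (Fin 2) ℂ} {d : ℕ} :
    Q ∈ annComp P d ↔ Q.IsHomogeneous d ∧ apolar Q P = 0 := by
  rw [annComp, Submodule.mem_inf, mem_homogeneousSubmodule, LinearMap.mem_ker, apolarLM_apply]

lemma homog1_decomp {f : MvPolynomial (Fin 2) ℂ} (hf : f.IsHomogeneous 1) :
    ∃ a b : ℂ, f = C a * X 0 + C b * X 1 := by
  obtain ⟨c, hc⟩ := homog_decomp hf
  refine ⟨c 1, c 0, ?_⟩
  rw [hc, Fin.sum_univ_two]
  norm_num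
  ring

lemma homog2_decomp {f : MvPolynomial (Fin 2) ℂ} (hf : f.IsHomogeneous 2) :
    ∃ a b c : ℂ, f = (C a * X 0 + C b * X 1) * X 0 + (C 0 * X 0 + C c * X 1) * X 1 := by
  obtain ⟨c, hc⟩ := homog_decomp hf
  refine ⟨c 2, c 1, c 0, ?_⟩
  rw [hc, Fin.sum_univ_three]
  norm_num
  ring

end

set_option maxHeartbeats 2000000 in
/-- For `l ≥ 3` and a nonzero binary form `P` of degree `l`, the following are equivalent:
(i) `Ann(P)₁ = 0` and `Ann(P)₂ = ℂ·λ²` for some nonzero linear form `λ`;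
(ii) `P = μ^{l-1}·ν` for linearly independent linear forms `μ`, `ν`. -/
theorem ann_one_two_iff (l : ℕ) (hl : 3 ≤ l) (P : MvPolynomial (Fin 2) ℂ)
    (hP : P.IsHomogeneous l) (hP0 : P ≠ 0) :
    (annComp P 1 = ⊥ ∧ ∃ lam : MvPolynomial (Fin 2) ℂ,
        lam.IsHomogeneous 1 ∧ lam ≠ 0 ∧ annComp P 2 = Submodule.span ℂ {lam ^ 2})
      ↔ ∃ mu nu : MvPolynomial (Fin 2) ℂ,
        mu.IsHomogeneous 1 ∧ nu.IsHomogeneous 1 ∧ LinearIndependent ℂ ![mu, nu] ∧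
        P = mu ^ (l - 1) * nu := by
  obtain ⟨n, rfl⟩ : ∃ n, l = n + 3 := ⟨l - 3, by omega⟩
  constructor
  · rintro ⟨h1, lam, hlam1, hlam0, h2⟩
    obtain ⟨u, v, hlam⟩ := homog1_decomp hlam1
    have huv : ¬(u = 0 ∧ v = 0) := by
      rintro ⟨hu, hv⟩
      exact hlam0 (by rw [hlam, hu, hv]; simp)
    have hlam2P : apolar (lam ^ 2) P = 0 := by
      have hmem : lam ^ 2 ∈ annComp P 2 := by
        rw [h2]
        exact Submodule.subset_span rfl
      exact (mem_annComp.mp hmem).2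
    have hg : apolar (C u * X 0 + C v * X 1) (apolar lam P) = 0 := by
      rw [← hlam, ← apolar_mul, ← pow_two]
      exact hlam2P
    have hP' : P.IsHomogeneous (n + 2 + 1) := hP
    have hgh : (apolar lam P).IsHomogeneous (n + 2) := by
      rw [hlam, apolar_lin, smul_eq_C_mul, smul_eq_C_mul]
      exact ((pderiv_homog 0 hP').C_mul u).add ((pderiv_homog 1 hP').C_mul v)
    obtain ⟨c2, hc2⟩ := kernel_lam u v huv (n + 2) (apolar lam P) hgh hg
    set mu : MvPolynomial (Fin 2) ℂ := C v * X 0 + C (-u) * X 1 with hmu_def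
    have hc2ne : c2 ≠ 0 := by
      intro h0
      have hz : apolar lam P = 0 := by rw [hc2, h0]; simp
      have hm : lam ∈ annComp P 1 := mem_annComp.mpr ⟨hlam1, hz⟩
      rw [h1, Submodule.mem_bot] at hm
      exact hlam0 hm
    obtain ⟨u', v', huv'⟩ : ∃ u' v' : ℂ, u * u' + v * v' = 1 := by
      rcases not_and_or.mp huv with hu | hv
      · exact ⟨u⁻¹, 0, by field_simp; ring⟩
      · exact ⟨0, v⁻¹, by field_simp; ring⟩
    set rho : MvPolynomial (Fin 2) ℂ := C u' * X 0 + C v' * X 1 with hrho_def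
    have hlammu : apolar (C u * X 0 + C v * X 1) mu = C 0 := by
      rw [hmu_def, apolar_lin_lin]
      congr 1
      ring
    have hlamrho : apolar (C u * X 0 + C v * X 1) rho = C 1 := by
      rw [hrho_def, apolar_lin_lin, huv']
    have hfker : apolar (C u * X 0 + C v * X 1) (P - C c2 * (mu ^ (n + 1 + 1) * rho)) = 0 := by
      rw [apolar_sub_right, apolar_lin_C_mul, apolar_lin_mul,
        apolar_lin_pow u v 0 mu hlammu (n + 1), hlamrho, ← hlam, hc2]
      simp only [mul_zero, map_zero, zero_mul, zero_add, map_one, mul_one]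
      ring
    have hfh : (P - C c2 * (mu ^ (n + 1 + 1) * rho)).IsHomogeneous (n + 3) := by
      refine hP.sub ?_
      have hh : (mu ^ (n + 1 + 1) * rho).IsHomogeneous (1 * (n + 2) + 1) :=
        ((lin_homog v (-u)).pow (n + 2)).mul (lin_homog u' v')
      rw [show 1 * (n + 2) + 1 = n + 3 by ring] at hh
      exact hh.C_mul c2
    obtain ⟨c3, hc3⟩ := kernel_lam u v huv (n + 3) _ hfh hfker
    refine ⟨mu, C c2 * rho + C c3 * mu, lin_homog v (-u),
      ((lin_homog u' v').C_mul c2).add ((lin_homog v (-u)).C_mul c3), ?_, ?_⟩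
    · have hnu_form : C c2 * rho + C c3 * mu
          = C (c2 * u' + c3 * v) * X 0 + C (c2 * v' + c3 * (-u)) * X 1 := by
        rw [hrho_def, hmu_def]
        simp only [map_add, map_mul, map_neg]
        ring
      rw [hmu_def, hnu_form]
      apply indep_of_det
      have : v * (c2 * v' + c3 * (-u)) - (-u) * (c2 * u' + c3 * v) = c2 := by
        linear_combination c2 * huv'
      rw [this]
      exact hc2ne
    · have hPeq : P = C c3 * mu ^ (n + 3) + C c2 * (mu ^ (n + 2) * rho) := by
        rw [← hc3]; ring
      rw [show n + 3 - 1 = n + 2 by omega, hPeq, pow_succ]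
      ring
  · rintro ⟨mu, nu, hmuh, hnuh, hind, hPf⟩
    obtain ⟨p, q, hmu⟩ := homog1_decomp hmuh
    obtain ⟨r, s, hnu⟩ := homog1_decomp hnuh
    have hD : p * s - q * r ≠ 0 := by
      rw [hmu, hnu] at hind
      exact det_of_indep hind
    have hD' : q * r - p * s ≠ 0 := fun h => hD (by linear_combination -h)
    have hmu0 : mu ≠ 0 := by
      intro h
      rw [h] at hmu
      obtain ⟨h1, h2⟩ := lin_eq_zero hmu.symm
      apply hD; rw [h1, h2]; ring
    have hn2 : ((n : ℂ) + 2) ≠ 0 := by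
      have := Nat.cast_add_one_ne_zero (R := ℂ) (n + 1)
      push_cast at this
      intro h
      exact this (by linear_combination h)
    have hn1 : ((n : ℂ) + 1) ≠ 0 := Nat.cast_add_one_ne_zero n
    have hPe : P = mu ^ (n + 1 + 1) * nu := by
      rw [hPf, show n + 3 - 1 = n + 1 + 1 by omega]
    have key : ∀ a b : ℂ, apolar (C a * X 0 + C b * X 1) P
        = C ((n + 1 + 1 : ℕ) * (a * p + b * q)) * (mu ^ (n + 1) * nu)
          + C (a * r + b * s) * mu ^ (n + 1 + 1) := by
      intro a b
      have hpair : apolar (C a * X 0 + C b * X 1) mu = C (a * p + b * q) := by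
        rw [hmu, apolar_lin_lin]
      have hpnu : apolar (C a * X 0 + C b * X 1) nu = C (a * r + b * s) := by
        rw [hnu, apolar_lin_lin]
      rw [hPe, apolar_lin_mul, apolar_lin_pow a b _ mu hpair (n + 1), hpnu]
      ring
    have key2 : ∀ a b a' b' : ℂ, apolar (C a' * X 0 + C b' * X 1)
          (apolar (C a * X 0 + C b * X 1) P)
        = C ((n + 1 + 1 : ℕ) * (a * p + b * q)) *
            (C ((n + 1 : ℕ) * (a' * p + b' * q)) * (mu ^ n * nu))
          + C ((n + 1 + 1 : ℕ) * (a * p + b * q)) * (C (a' * r + b' * s) * mu ^ (n + 1))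
          + C (a * r + b * s) * (C ((n + 1 + 1 : ℕ) * (a' * p + b' * q)) * mu ^ (n + 1)) := by
      intro a b a' b'
      have hpair : apolar (C a' * X 0 + C b' * X 1) mu = C (a' * p + b' * q) := by
        rw [hmu, apolar_lin_lin]
      have hpnu : apolar (C a' * X 0 + C b' * X 1) nu = C (a' * r + b' * s) := by
        rw [hnu, apolar_lin_lin]
      rw [key a b, apolar_add_right, apolar_lin_C_mul, apolar_lin_C_mul,
        apolar_lin_mul, apolar_lin_pow a' b' _ mu hpair n,
        apolar_lin_pow a' b' _ mu hpair (n + 1), hpnu]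
      ring
    set lam : MvPolynomial (Fin 2) ℂ := C q * X 0 + C (-p) * X 1 with hlam_def
    constructor
    · -- Ann₁ = ⊥
      rw [eq_bot_iff]
      intro Q hQ
      obtain ⟨hQh, hQ0⟩ := mem_annComp.mp hQ
      obtain ⟨a, b, hQe⟩ := homog1_decomp hQh
      rw [hQe, key a b] at hQ0
      have hfac : mu ^ (n + 1) * (C (((n : ℂ) + 2) * (a * p + b * q)) * nu
          + C (a * r + b * s) * mu) = 0 := by
        rw [← hQ0]
        simp only [map_mul, map_add, map_natCast, map_ofNat, map_one, map_pow, map_zero, map_neg]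
        push_cast
        ring
      have hz : C (((n : ℂ) + 2) * (a * p + b * q)) * nu + C (a * r + b * s) * mu = 0 := by
        rcases mul_eq_zero.mp hfac with h | h
        · exact absurd h (pow_ne_zero _ hmu0)
        · exact h
      set A : ℂ := ((n : ℂ) + 2) * (a * p + b * q) with hA_def
      set B : ℂ := a * r + b * s with hB_def
      have hz2 : C (A * r + B * p) * X 0 + C (A * s + B * q) * X 1
          = (0 : MvPolynomial (Fin 2) ℂ) := by
        rw [← hz, hmu, hnu]
        simp only [map_add, map_mul]
        ring
      obtain ⟨ez1, ez2⟩ := lin_eq_zero hz2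
      have hA : A = 0 := by
        have h' : A * (q * r - p * s) = 0 := by linear_combination q * ez1 - p * ez2
        rcases mul_eq_zero.mp h' with h' | h'
        · exact h'
        · exact absurd h' hD'
      have hB : B = 0 := by
        have h' : B * (p * s - q * r) = 0 := by linear_combination s * ez1 - r * ez2
        rcases mul_eq_zero.mp h' with h' | h'
        · exact h'
        · exact absurd h' hD
      have hab1 : a * p + b * q = 0 := by
        rcases mul_eq_zero.mp hA with h' | h'
        · exact absurd h' hn2
        · exact h'
      have hab2 : a * r + b * s = 0 := hB
      have ha : a = 0 := by
        have h' : a * (p * s - q * r) = 0 := by linear_combination s * hab1 - q * hab2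
        rcases mul_eq_zero.mp h' with h' | h'
        · exact h'
        · exact absurd h' hD
      have hb : b = 0 := by
        have h' : b * (p * s - q * r) = 0 := by linear_combination p * hab2 - r * hab1
        rcases mul_eq_zero.mp h' with h' | h'
        · exact h'
        · exact absurd h' hD
      rw [Submodule.mem_bot, hQe, ha, hb]
      simp
    · -- Ann₂ = span {lam ^ 2}
      refine ⟨lam, lin_homog q (-p), ?_, ?_⟩
      · intro h
        rw [hlam_def] at h
        obtain ⟨h1, h2⟩ := lin_eq_zero h
        apply hD
        rw [h1, neg_eq_zero.mp h2]
        ring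
      · have hlam2mem : lam ^ 2 ∈ annComp P 2 := by
          refine mem_annComp.mpr ⟨?_, ?_⟩
          · have := (lin_homog q (-p)).pow 2
            rw [one_mul] at this
            exact this
          · rw [pow_two, apolar_mul, hlam_def, key2 q (-p) q (-p)]
            rw [show q * p + -p * q = 0 by ring]
            simp only [mul_zero, map_zero, zero_mul, add_zero, zero_add]
        apply le_antisymm
        · intro Q hQ
          obtain ⟨hQh, hQP0⟩ := mem_annComp.mp hQ
          obtain ⟨a, b, c, hQe⟩ := homog2_decomp hQh
          have e0 : apolar (X 0) P = apolar (C 1 * X 0 + C 0 * X 1) P := by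
            congr 1
            simp
          have e1 : apolar (X 1) P = apolar (C 0 * X 0 + C 1 * X 1) P := by
            congr 1
            simp
          have hfac : mu ^ n * (C (((n : ℂ) + 2) * ((n : ℂ) + 1) *
                (a * p ^ 2 + b * p * q + c * q ^ 2)) * nu
              + C (((n : ℂ) + 2) * (2 * a * p * r + b * (p * s + q * r) + 2 * c * q * s)) * mu)
              = 0 := by
            rw [← hQP0, hQe, apolar_add_left, apolar_mul, apolar_mul, e0, e1,
              key2 1 0 a b, key2 0 1 0 c]
            simp only [map_mul, map_add, map_natCast, map_ofNat, map_one, map_pow, map_zero, map_neg]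
            push_cast
            ring
          have hz : C (((n : ℂ) + 2) * ((n : ℂ) + 1) *
                (a * p ^ 2 + b * p * q + c * q ^ 2)) * nu
              + C (((n : ℂ) + 2) * (2 * a * p * r + b * (p * s + q * r) + 2 * c * q * s)) * mu
              = 0 := by
            rcases mul_eq_zero.mp hfac with h | h
            · exact absurd h (pow_ne_zero _ hmu0)
            · exact h
          set A : ℂ := ((n : ℂ) + 2) * ((n : ℂ) + 1) * (a * p ^ 2 + b * p * q + c * q ^ 2)
            with hA_def
          set B : ℂ := ((n : ℂ) + 2) * (2 * a * p * r + b * (p * s + q * r) + 2 * c * q * s)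
            with hB_def
          have hz2 : C (A * r + B * p) * X 0 + C (A * s + B * q) * X 1
              = (0 : MvPolynomial (Fin 2) ℂ) := by
            rw [← hz, hmu, hnu]
            simp only [map_add, map_mul]
            ring
          obtain ⟨ez1, ez2⟩ := lin_eq_zero hz2
          have hA : A = 0 := by
            have h' : A * (q * r - p * s) = 0 := by linear_combination q * ez1 - p * ez2
            rcases mul_eq_zero.mp h' with h' | h'
            · exact h'
            · exact absurd h' hD'
          have hB : B = 0 := by
            have h' : B * (p * s - q * r) = 0 := by linear_combination s * ez1 - r * ez2
            rcases mul_eq_zero.mp h' with h' | h'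
            · exact h'
            · exact absurd h' hD
          have hq1 : a * p ^ 2 + b * p * q + c * q ^ 2 = 0 := by
            rw [hA_def] at hA
            rcases mul_eq_zero.mp hA with h' | h'
            · rcases mul_eq_zero.mp h' with h'' | h''
              · exact absurd h'' hn2
              · exact absurd h'' hn1
            · exact h'
          have hq2 : 2 * a * p * r + b * (p * s + q * r) + 2 * c * q * s = 0 := by
            rw [hB_def] at hB
            rcases mul_eq_zero.mp hB with h' | h'
            · exact absurd h' hn2
            · exact h'
          rw [Submodule.mem_span_singleton]
          by_cases hqz : q = 0
          · have hpz : p ≠ 0 := by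
              intro hp
              apply hD
              rw [hp, hqz]
              ring
            have ha : a = 0 := by
              have h' : a * p ^ 2 = 0 := by linear_combination hq1 - (b * p + c * q) * hqz
              rcases mul_eq_zero.mp h' with h' | h'
              · exact h'
              · exact absurd h' (pow_ne_zero _ hpz)
            have hs : s ≠ 0 := by
              intro hs
              apply hD
              rw [hqz, hs]
              ring
            have hb : b = 0 := by
              have h' : b * (p * s) = 0 := by
                linear_combination hq2 - 2 * p * r * ha - (b * r + 2 * c * s) * hqz
              rcases mul_eq_zero.mp h' with h' | h'
              · exact h'
              · exact absurd h' (mul_ne_zero hpz hs)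
            refine ⟨c / p ^ 2, ?_⟩
            rw [hQe, hlam_def]
            exact sq_comb (c / p ^ 2) p q a b c (by rw [ha, hqz]; ring)
              (by rw [hb, hqz]; ring) (by field_simp)
          · have hX : 2 * a * p + b * q = 0 := by
              have h' : (2 * a * p + b * q) * (q * r - p * s) = 0 := by
                linear_combination q * hq2 - 2 * s * hq1
              rcases mul_eq_zero.mp h' with h' | h'
              · exact h'
              · exact absurd h' hD'
            refine ⟨a / q ^ 2, ?_⟩
            have hb : b = -(2 * (a / q ^ 2) * p * q) := by
              field_simp
              linear_combination hX
            have hc : c = a / q ^ 2 * p ^ 2 := by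
              field_simp
              linear_combination hq1 - p * hX
            rw [hQe, hlam_def]
            exact sq_comb (a / q ^ 2) p q a b c (by field_simp) hb hc
        · rw [Submodule.span_le, Set.singleton_subset_iff]
          exact hlam2mem
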